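/- Let N be a connected network whose degree-1 nodes are bijectively labeled by a set X, and let M be a connected subnetwork of N, with the restricted labeling of some of its degree-1 nodes by a subset Y ⊆ X. If a set S ⊆ Y with |S| ≥ 3 determines a blob B₀ of M, then S determines a blob B of N (namely the blob of N containing B₀); moreover, for each s ∈ S, the cut edge of N incident to B through which the path from B to s passes is an edge of M. -/

import Mathlib

/-!
# Common framework

Finite directed multigraphs, undirected connectivity, numbers of connected
components, cut edges, subgraphs, blobs, blobs determined by leaf sets,
B-quartets, and quartets displayed via cut-edge separation.

A *network* is modelled as a finite directed multigraph (edge directions are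
simply ignored for the undirected notions of connectivity, cut edges and
blobs).
-/

/-- A finite directed multigraph: finite types of nodes and of edges, with
source and target maps. -/
structure MDigraph where
  V : Type
  E : Type
  finV : Finite V
  finE : Finite E
  src : E → V
  tgt : E → V

attribute [instance] MDigraph.finV MDigraph.finE

namespace MDigraph

section Basic

variable (G : MDigraph)

/-- One undirected step between `u` and `v` along an edge from the set `F`. -/
def Step (F : Set G.E) (u v : G.V) : Prop :=
  ∃ e ∈ F, (G.src e = u ∧ G.tgt e = v) ∨ (G.src e = v ∧ G.tgt e = u)

/-- Undirected reachability (an undirected path) using only edges in `F`. -/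
def Conn (F : Set G.E) (u v : G.V) : Prop :=
  Relation.ReflTransGen (G.Step F) u v

/-- One directed step from `u` to `v` along an edge from the set `F`. -/
def DStep (F : Set G.E) (u v : G.V) : Prop :=
  ∃ e ∈ F, G.src e = u ∧ G.tgt e = v

/-- Directed reachability (a directed path) using only edges in `F`. -/
def DConn (F : Set G.E) (u v : G.V) : Prop :=
  Relation.ReflTransGen (G.DStep F) u v

/-- `u` is above (ancestral to) `v`: there is a directed path from `u` to `v`. -/
def Above (u v : G.V) : Prop := G.DConn Set.univ u v

/-- In-degree of a node. -/
noncomputable def inDeg (v : G.V) : ℕ := Nat.card {e : G.E // G.tgt e = v}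

/-- Out-degree of a node. -/
noncomputable def outDeg (v : G.V) : ℕ := Nat.card {e : G.E // G.src e = v}

/-- Undirected degree of a node (a loop counts twice). -/
noncomputable def degree (v : G.V) : ℕ := G.inDeg v + G.outDeg v

/-- The number of connected components of the graph with node set `W` and edge
set the restriction to `W` of `F` (two nodes of `W` lie in the same connected
component iff they are joined by an undirected path). -/
noncomputable def numComponents (W : Set G.V) (F : Set G.E) : ℕ :=
  Nat.card (Quot (fun u v : W => G.Step {e ∈ F | G.src e ∈ W ∧ G.tgt e ∈ W} u.1 v.1))

/-- `v` lies on every directed path from `u` to `w`: there is no directed path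
from `u` to `w` all of whose nodes avoid `v`. -/
def OnEveryPath (v u w : G.V) : Prop :=
  ¬ (u ≠ v ∧ w ≠ v ∧
      Relation.ReflTransGen (fun a b => G.DStep Set.univ a b ∧ a ≠ v ∧ b ≠ v) u w)

end Basic

/-- A subgraph (subnetwork): a set of nodes together with a set of edges
joining them. -/
structure Subgraph (G : MDigraph) where
  verts : Set G.V
  edges : Set G.E
  src_mem : ∀ e ∈ edges, G.src e ∈ verts
  tgt_mem : ∀ e ∈ edges, G.tgt e ∈ verts

/-- The whole graph, as a subgraph of itself. -/
def top (G : MDigraph) : Subgraph G :=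
  ⟨Set.univ, Set.univ, fun _ _ => Set.mem_univ _, fun _ _ => Set.mem_univ _⟩

namespace Subgraph

variable {G : MDigraph}

/-- Containment of subgraphs. -/
def le (H K : Subgraph G) : Prop := H.verts ⊆ K.verts ∧ H.edges ⊆ K.edges

/-- The subgraph `H` is connected. -/
def IsConnected (H : Subgraph G) : Prop :=
  H.verts.Nonempty ∧ ∀ u ∈ H.verts, ∀ v ∈ H.verts, G.Conn H.edges u v

/-- Delete an edge from a subgraph. -/
def deleteEdge (H : Subgraph G) (e : G.E) : Subgraph G :=
  ⟨H.verts, H.edges \ {e}, fun e' he' => H.src_mem e' he'.1,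
    fun e' he' => H.tgt_mem e' he'.1⟩

/-- The number of connected components of a subgraph. -/
noncomputable def numComponents (H : Subgraph G) : ℕ :=
  G.numComponents H.verts H.edges

/-- `e` is a cut edge of the (sub)graph `H`: deleting it increases the number
of connected components. -/
def IsCutEdge (H : Subgraph G) (e : G.E) : Prop :=
  e ∈ H.edges ∧ H.numComponents < (H.deleteEdge e).numComponents

end Subgraph

variable {G : MDigraph}

/-- `B` is a blob of the network `H`: a maximal connected subnetwork of `H`
having no cut edges.  (A blob is *trivial* if it consists of a single node.) -/
def IsBlobIn (H B : Subgraph G) : Prop :=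
  B.le H ∧ B.IsConnected ∧ (∀ e, ¬ B.IsCutEdge e) ∧
    ∀ B' : Subgraph G, B'.le H → B'.IsConnected → (∀ e, ¬ B'.IsCutEdge e) →
      B.le B' → B'.le B

/-- `e` is a cut edge of the network `H` incident to the blob `B`: exactly one
of its endpoints is a node of `B`. -/
def IncidentCut (H B : Subgraph G) (e : G.E) : Prop :=
  H.IsCutEdge e ∧ Xor' (G.src e ∈ B.verts) (G.tgt e ∈ B.verts)

/-- The blob `B` of the network `H` is determined by the set `S` of leaf
labels: deletion of the cut edges of `H` incident to `B` leaves the nodes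
labelled by the elements of `S` in distinct connected components. -/
def DeterminesIn {X : Type} (H B : Subgraph G) (leaf : X → G.V) (S : Set X) : Prop :=
  ∀ s ∈ S, ∀ t ∈ S, s ≠ t →
    ¬ G.Conn {e ∈ H.edges | ¬ IncidentCut H B e} (leaf s) (leaf t)

/-- Four taxa form a B-quartet on the network `H`: some blob of `H` is
determined by them. -/
def BQuartetIn {X : Type} (H : Subgraph G) (leaf : X → G.V) (a b c d : X) : Prop :=
  ∃ B : Subgraph G, IsBlobIn H B ∧ DeterminesIn H B leaf ({a, b, c, d} : Set X)

/-- Some cut edge of `H` separates the taxa `p, q` from the taxa `r, s`: after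
its deletion `p, q` lie in one connected component and `r, s` in another.  For
a 4-taxon set `{p,q,r,s}` this says exactly that the (reduced unrooted) tree of
blobs of `H` displays the resolved quartet `pq|rs` (the edges of the tree of
blobs correspond exactly to the cut edges of the network, and suppressing
degree-2 nodes or contracting blobs does not affect which taxa a cut edge
separates). -/
def CutSep {X : Type} (H : Subgraph G) (leaf : X → G.V) (p q r s : X) : Prop :=
  ∃ e, H.IsCutEdge e ∧
    G.Conn (H.edges \ {e}) (leaf p) (leaf q) ∧
    G.Conn (H.edges \ {e}) (leaf r) (leaf s) ∧
    ¬ G.Conn (H.edges \ {e}) (leaf p) (leaf r)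

end MDigraph

open MDigraph

namespace MDigraph

variable {G : MDigraph}

lemma Step.symm {F : Set G.E} {u v : G.V} (h : G.Step F u v) : G.Step F v u := by
  obtain ⟨e, he, h⟩ := h; exact ⟨e, he, h.symm⟩

lemma Conn.refl' {F : Set G.E} {u : G.V} : G.Conn F u u := Relation.ReflTransGen.refl

lemma Conn.trans {F : Set G.E} {u v w : G.V} (h : G.Conn F u v) (h' : G.Conn F v w) :
    G.Conn F u w := Relation.ReflTransGen.trans h h'

lemma Conn.symm {F : Set G.E} {u v : G.V} (h : G.Conn F u v) : G.Conn F v u := by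
  induction h with
  | refl => exact Relation.ReflTransGen.refl
  | tail _ hs ih => exact Relation.ReflTransGen.head (Step.symm hs) ih

lemma Conn.single {F : Set G.E} {u v : G.V} (h : G.Step F u v) : G.Conn F u v :=
  Relation.ReflTransGen.single h

lemma Step.mono {F F' : Set G.E} (hFF : F ⊆ F') {u v : G.V} (h : G.Step F u v) :
    G.Step F' u v := by obtain ⟨e, he, h⟩ := h; exact ⟨e, hFF he, h⟩

lemma Conn.mono {F F' : Set G.E} (hFF : F ⊆ F') {u v : G.V} (h : G.Conn F u v) :
    G.Conn F' u v := Relation.ReflTransGen.mono (r := G.Step F) (p := G.Step F')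
      (fun _ _ hs => Step.mono hFF hs) u v h

/-- Decomposition of a walk relative to a possibly-used edge `f`. -/
lemma connD {F : Set G.E} (f : G.E) {a b : G.V} (h : G.Conn F a b) :
    G.Conn (F \ {f}) a b ∨ ∃ c₁ c₂ : G.V, (c₁ = G.src f ∨ c₁ = G.tgt f) ∧
      (c₂ = G.src f ∨ c₂ = G.tgt f) ∧ G.Conn (F \ {f}) a c₁ ∧ G.Conn (F \ {f}) c₂ b := by
  induction h using Relation.ReflTransGen.head_induction_on with
  | refl => exact Or.inl Conn.refl'
  | head hstep hrest ih =>
    rename_i x y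
    obtain ⟨g, hgF, ho⟩ := hstep
    by_cases hgf : g = f
    · subst hgf
      have hx : x = G.src g ∨ x = G.tgt g := by tauto
      rcases ih with h1 | ⟨c₁, c₂, hc₁, hc₂, h1, h2⟩
      · exact Or.inr ⟨x, y, hx, by tauto, Conn.refl', h1⟩
      · exact Or.inr ⟨x, c₂, hx, hc₂, Conn.refl', h2⟩
    · have hstep' : G.Step (F \ {f}) x y := ⟨g, ⟨hgF, hgf⟩, ho⟩
      rcases ih with h1 | ⟨c₁, c₂, hc₁, hc₂, h1, h2⟩
      · exact Or.inl ((Conn.single hstep').trans h1)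
      · exact Or.inr ⟨c₁, c₂, hc₁, hc₂, (Conn.single hstep').trans h1, h2⟩

lemma conn_detour {F : Set G.E} {e : G.E} {u v : G.V}
    (hc : G.Conn (F \ {e}) (G.src e) (G.tgt e)) (h : G.Conn F u v) :
    G.Conn (F \ {e}) u v := by
  induction h with
  | refl => exact Conn.refl'
  | tail hrtg hstep ih =>
    rename_i x y
    obtain ⟨g, hgF, ho⟩ := hstep
    by_cases hge : g = e
    · subst hge
      rcases ho with ⟨h1, h2⟩ | ⟨h1, h2⟩
      · exact ih.trans (h1 ▸ h2 ▸ hc)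
      · exact ih.trans (h1 ▸ h2 ▸ hc.symm)
    · exact ih.trans (Conn.single ⟨g, ⟨hgF, hge⟩, ho⟩)

lemma conn_to_eqvgen {W : Set G.V} {F : Set G.E}
    (hF : ∀ e ∈ F, G.src e ∈ W ∧ G.tgt e ∈ W) :
    ∀ {x y : G.V}, G.Conn F x y → ∀ (hx : x ∈ W) (hy : y ∈ W),
      Relation.EqvGen (fun a b : W => G.Step F a.1 b.1) ⟨x, hx⟩ ⟨y, hy⟩ := by
  intro x y h
  induction h with
  | refl => intro hx hy; exact Relation.EqvGen.refl _
  | tail hrtg hstep ih =>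
    rename_i b c
    intro hx hy
    have hb : b ∈ W := by
      obtain ⟨e, he, h'⟩ := hstep
      rcases h' with ⟨h1, h2⟩ | ⟨h1, h2⟩
      · exact h1 ▸ (hF e he).1
      · exact h2 ▸ (hF e he).2
    exact Relation.EqvGen.trans _ _ _ (ih hx hb)
      (Relation.EqvGen.rel (⟨b, hb⟩ : W) ⟨c, hy⟩ hstep)

lemma quot_mk_eq_iff {W : Set G.V} {F : Set G.E}
    (hF : ∀ e ∈ F, G.src e ∈ W ∧ G.tgt e ∈ W) (u v : W) :
    Quot.mk (fun a b : W => G.Step F a.1 b.1) u = Quot.mk _ v ↔ G.Conn F u.1 v.1 := by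
  rw [Quot.eq]
  constructor
  · intro h
    induction h with
    | rel a b hab => exact Conn.single hab
    | refl a => exact Conn.refl'
    | symm a b _ ih => exact ih.symm
    | trans a b c _ _ ih₁ ih₂ => exact ih₁.trans ih₂
  · intro h
    obtain ⟨x, hx⟩ := u; obtain ⟨y, hy⟩ := v
    exact conn_to_eqvgen hF h hx hy


end MDigraph
namespace MDigraph
variable {G : MDigraph}


lemma card_quot_congr {W : Set G.V} {F F' : Set G.E} (h : F = F') :
    Nat.card (Quot (fun u v : W => G.Step F u.1 v.1)) =
    Nat.card (Quot (fun u v : W => G.Step F' u.1 v.1)) := by subst h; rfl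

lemma Subgraph.numComponents_eq (H : Subgraph G) :
    H.numComponents = Nat.card (Quot (fun u v : H.verts => G.Step H.edges u.1 v.1)) := by
  have h : {e ∈ H.edges | G.src e ∈ H.verts ∧ G.tgt e ∈ H.verts} = H.edges := by
    ext e
    simp only [Set.mem_setOf_eq]
    exact ⟨fun h => h.1, fun h => ⟨h, H.src_mem e h, H.tgt_mem e h⟩⟩
  exact card_quot_congr h

lemma Subgraph.cut_char (H : Subgraph G) (e : G.E) :
    H.IsCutEdge e ↔ e ∈ H.edges ∧ ¬ G.Conn (H.edges \ {e}) (G.src e) (G.tgt e) := by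
  classical
  have hF : ∀ f ∈ H.edges, G.src f ∈ H.verts ∧ G.tgt f ∈ H.verts :=
    fun f hf => ⟨H.src_mem f hf, H.tgt_mem f hf⟩
  have hF' : ∀ f ∈ H.edges \ {e}, G.src f ∈ H.verts ∧ G.tgt f ∈ H.verts :=
    fun f hf => hF f hf.1
  have h1 : H.numComponents =
      Nat.card (Quot (fun u v : H.verts => G.Step H.edges u.1 v.1)) := H.numComponents_eq
  have h2 : (H.deleteEdge e).numComponents =
      Nat.card (Quot (fun u v : H.verts => G.Step (H.edges \ {e}) u.1 v.1)) :=
    (H.deleteEdge e).numComponents_eq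
  have hφ : ∃ φ : Quot (fun u v : H.verts => G.Step (H.edges \ {e}) u.1 v.1) →
      Quot (fun u v : H.verts => G.Step H.edges u.1 v.1), Function.Surjective φ ∧
      ∀ u : H.verts, φ (Quot.mk _ u) = Quot.mk _ u := by
    refine ⟨Quot.map id (fun a b hab => hab.mono Set.diff_subset), ?_, fun u => rfl⟩
    intro q
    induction q using Quot.ind with
    | _ a => exact ⟨Quot.mk _ a, rfl⟩
  obtain ⟨φ, hsur, hmk⟩ := hφ
  constructor
  · rintro ⟨he, hlt⟩
    refine ⟨he, fun hc => ?_⟩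
    have hinj : Function.Injective φ := by
      intro a b
      induction a using Quot.ind with
      | _ a =>
        induction b using Quot.ind with
        | _ b =>
          intro h
          rw [hmk, hmk, quot_mk_eq_iff hF] at h
          rw [quot_mk_eq_iff hF']
          exact conn_detour hc h
    have hle := Nat.card_le_card_of_injective φ hinj
    rw [h1, h2] at hlt
    omega
  · rintro ⟨he, hnc⟩
    refine ⟨he, ?_⟩
    rw [h1, h2]
    have hne : Quot.mk (fun u v : H.verts => G.Step (H.edges \ {e}) u.1 v.1)
        ⟨G.src e, H.src_mem e he⟩ = Quot.mk _ ⟨G.tgt e, H.tgt_mem e he⟩ → False := by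
      rw [quot_mk_eq_iff hF']; exact hnc
    have heq : φ (Quot.mk _ ⟨G.src e, H.src_mem e he⟩) = φ (Quot.mk _ ⟨G.tgt e, H.tgt_mem e he⟩) := by
      rw [hmk, hmk, quot_mk_eq_iff hF]
      exact Conn.single ⟨e, he, Or.inl ⟨rfl, rfl⟩⟩
    have hninj : ¬ Function.Injective φ := fun h => hne (h heq)
    letI : Fintype (Quot (fun u v : H.verts => G.Step H.edges u.1 v.1)) := Fintype.ofFinite _
    letI : Fintype (Quot (fun u v : H.verts => G.Step (H.edges \ {e}) u.1 v.1)) := Fintype.ofFinite _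
    rw [Nat.card_eq_fintype_card, Nat.card_eq_fintype_card]
    exact Fintype.card_lt_of_surjective_not_injective φ hsur hninj

/-- Every edge of `F` has its endpoints joined avoiding itself. -/
def NoCutS (G : MDigraph) (F : Set G.E) : Prop :=
  ∀ f ∈ F, G.Conn (F \ {f}) (G.src f) (G.tgt f)

lemma noCut_iff (H : Subgraph G) : (∀ f, ¬ H.IsCutEdge f) ↔ NoCutS G H.edges := by
  constructor
  · intro h f hf
    by_contra hc
    exact h f ((H.cut_char f).2 ⟨hf, hc⟩)
  · intro h f hc
    rw [H.cut_char] at hc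
    exact hc.2 (h f hc.1)

lemma nocut_union {F₁ F₂ : Set G.E} (h₁ : NoCutS G F₁) (h₂ : NoCutS G F₂) :
    NoCutS G (F₁ ∪ F₂) := by
  intro f hf
  rcases hf with hf | hf
  · refine (h₁ f hf).mono ?_
    intro x hx; exact ⟨Or.inl hx.1, hx.2⟩
  · refine (h₂ f hf).mono ?_
    intro x hx; exact ⟨Or.inr hx.1, hx.2⟩

lemma exists_min_conn {F : Set G.E} {a b : G.V} (h : G.Conn F a b) :
    ∃ P : Set G.E, P ⊆ F ∧ G.Conn P a b ∧ ∀ P', P' ⊂ P → ¬ G.Conn P' a b := by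
  obtain ⟨P, hP, hmin⟩ := Set.Finite.exists_minimalFor id
    {P : Set G.E | P ⊆ F ∧ G.Conn P a b} (Set.toFinite _) ⟨F, subset_rfl, h⟩
  refine ⟨P, hP.1, hP.2, fun P' hss hc => ?_⟩
  exact not_subset_of_ssubset hss (@hmin P' ⟨hss.subset.trans hP.1, hc⟩ hss.subset)

lemma cyc {P : Set G.E} {e : G.E} (heP : e ∉ P)
    (hab : G.Conn P (G.src e) (G.tgt e))
    (hmin : ∀ P', P' ⊂ P → ¬ G.Conn P' (G.src e) (G.tgt e)) :
    NoCutS G ({e} ∪ P) ∧ ∀ f ∈ P,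
      G.Conn ({e} ∪ P) (G.src e) (G.src f) ∧ G.Conn ({e} ∪ P) (G.src e) (G.tgt f) := by
  have hPsub : P ⊆ ({e} ∪ P) \ {e} := fun x hx =>
    ⟨Or.inr hx, fun hxe => heP ((Set.eq_of_mem_singleton hxe) ▸ hx)⟩
  have key : ∀ f ∈ P, G.Conn (({e} ∪ P) \ {f}) (G.src f) (G.tgt f) ∧
      G.Conn ({e} ∪ P) (G.src e) (G.src f) ∧ G.Conn ({e} ∪ P) (G.src e) (G.tgt f) := by
    intro f hf
    have hfe : e ≠ f := fun h => heP (h ▸ hf)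
    have hssub : P \ {f} ⊂ P :=
      (Set.ssubset_iff_of_subset Set.diff_subset).2 ⟨f, hf, fun h => h.2 rfl⟩
    have hPf : P \ {f} ⊆ ({e} ∪ P) \ {f} := fun x hx => ⟨Or.inr hx.1, hx.2⟩
    have hPu : P \ {f} ⊆ {e} ∪ P := fun x hx => Or.inr hx.1
    have hePf : G.Conn (({e} ∪ P) \ {f}) (G.src e) (G.tgt e) :=
      Conn.single ⟨e, ⟨Or.inl rfl, fun h => hfe (Set.eq_of_mem_singleton h)⟩, Or.inl ⟨rfl, rfl⟩⟩
    have heu : G.Conn ({e} ∪ P) (G.src e) (G.tgt e) :=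
      Conn.single ⟨e, Or.inl rfl, Or.inl ⟨rfl, rfl⟩⟩
    rcases connD f hab with h1 | ⟨c₁, c₂, hc₁, hc₂, h1, h2⟩
    · exact absurd h1 (hmin _ hssub)
    · rcases hc₁ with rfl | rfl <;> rcases hc₂ with rfl | rfl
      · exact absurd (h1.trans h2) (hmin _ hssub)
      · exact ⟨(h1.mono hPf).symm.trans (hePf.trans (h2.mono hPf).symm),
          (h1.mono hPu), heu.trans (h2.mono hPu).symm⟩
      · exact ⟨(h2.mono hPf).trans (hePf.symm.trans (h1.mono hPf)),
          heu.trans (h2.mono hPu).symm, h1.mono hPu⟩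
      · exact absurd (h1.trans h2) (hmin _ hssub)
  refine ⟨?_, fun f hf => ((key f hf).2)⟩
  intro f hf
  rcases hf with hf | hf
  · have : f = e := Set.eq_of_mem_singleton hf
    subst this
    exact hab.mono hPsub
  · exact (key f hf).1

lemma Subgraph.ext' {H K : Subgraph G} (h1 : H.verts = K.verts) (h2 : H.edges = K.edges) :
    H = K := by
  cases H; cases K
  simp only [Subgraph.mk.injEq]
  exact ⟨h1, h2⟩

lemma exists_blob (B₀ : Subgraph G) (hc : B₀.IsConnected) (hnc : ∀ f, ¬ B₀.IsCutEdge f) :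
    ∃ B : Subgraph G, IsBlobIn (top G) B ∧ B₀.le B := by
  classical
  haveI : Finite (Subgraph G) :=
    Finite.of_injective (fun H : Subgraph G => (H.verts, H.edges))
      (fun H K h => Subgraph.ext' (congrArg Prod.fst h) (congrArg Prod.snd h))
  obtain ⟨B, hBs, hmax⟩ := Set.Finite.exists_maximalFor
    (fun B : Subgraph G => (B.verts, B.edges))
    {B : Subgraph G | B.IsConnected ∧ (∀ f, ¬ B.IsCutEdge f) ∧ B₀.le B}
    (Set.toFinite _) ⟨B₀, hc, hnc, subset_rfl, subset_rfl⟩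
  refine ⟨B, ⟨⟨Set.subset_univ _, Set.subset_univ _⟩, hBs.1, hBs.2.1, ?_⟩, hBs.2.2⟩
  intro B' _ hB'c hB'nc hBB'
  have heqp := @hmax B' ⟨hB'c, hB'nc, hBs.2.2.1.trans hBB'.1, hBs.2.2.2.trans hBB'.2⟩
    (Prod.mk_le_mk.mpr ⟨hBB'.1, hBB'.2⟩)
  exact ⟨(Prod.mk_le_mk.mp heqp).1, (Prod.mk_le_mk.mp heqp).2⟩

end MDigraph
namespace MDigraph
variable {G : MDigraph}

lemma blob_edge {H B : Subgraph G} (hblob : IsBlobIn H B) {e : G.E} (he : e ∈ H.edges)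
    (hnc : G.Conn (H.edges \ {e}) (G.src e) (G.tgt e))
    (hend : G.src e ∈ B.verts ∨ G.tgt e ∈ B.verts) : e ∈ B.edges := by
  classical
  obtain ⟨P, hPF, hPc, hPmin⟩ := exists_min_conn hnc
  have heP : e ∉ P := fun h => (hPF h).2 rfl
  have hPF' : P ⊆ H.edges := fun x hx => (hPF hx).1
  obtain ⟨hcyc, hvert⟩ := cyc heP hPc hPmin
  have hsrcm : ∀ f ∈ B.edges ∪ ({e} ∪ P),
      G.src f ∈ B.verts ∪ {v | v = G.src e ∨ v = G.tgt e ∨ ∃ g ∈ P, v = G.src g ∨ v = G.tgt g} := by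
    intro f hf
    simp only [Set.mem_union, Set.mem_singleton_iff] at hf
    rcases hf with hf | rfl | hf
    · exact Or.inl (B.src_mem f hf)
    · exact Or.inr (Or.inl rfl)
    · exact Or.inr (Or.inr (Or.inr ⟨f, hf, Or.inl rfl⟩))
  have htgtm : ∀ f ∈ B.edges ∪ ({e} ∪ P),
      G.tgt f ∈ B.verts ∪ {v | v = G.src e ∨ v = G.tgt e ∨ ∃ g ∈ P, v = G.src g ∨ v = G.tgt g} := by
    intro f hf
    simp only [Set.mem_union, Set.mem_singleton_iff] at hf
    rcases hf with hf | rfl | hf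
    · exact Or.inl (B.tgt_mem f hf)
    · exact Or.inr (Or.inr (Or.inl rfl))
    · exact Or.inr (Or.inr (Or.inr ⟨f, hf, Or.inr rfl⟩))
  let B' : Subgraph G :=
    ⟨B.verts ∪ {v | v = G.src e ∨ v = G.tgt e ∨ ∃ g ∈ P, v = G.src g ∨ v = G.tgt g},
      B.edges ∪ ({e} ∪ P), hsrcm, htgtm⟩
  have hsub1 : B.edges ⊆ B'.edges := Set.subset_union_left
  have hsub2 : {e} ∪ P ⊆ B'.edges := Set.subset_union_right
  have hse : G.Conn B'.edges (G.src e) (G.tgt e) :=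
    Conn.single ⟨e, hsub2 (Or.inl rfl), Or.inl ⟨rfl, rfl⟩⟩
  have hsrcB' : ∀ w ∈ B'.verts, G.Conn B'.edges (G.src e) w := by
    intro w hw
    have hBanch : ∀ u ∈ B.verts, G.Conn B'.edges (G.src e) u := by
      intro u hu
      rcases hend with hB | hB
      · exact (hblob.2.1.2 _ hB _ hu).mono hsub1
      · exact hse.trans ((hblob.2.1.2 _ hB _ hu).mono hsub1)
    rcases hw with hw | hw
    · exact hBanch w hw
    · rcases hw with rfl | rfl | ⟨f, hf, rfl | rfl⟩
      · exact Conn.refl'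
      · exact hse
      · exact ((hvert f hf).1).mono hsub2
      · exact ((hvert f hf).2).mono hsub2
  have hconn' : B'.IsConnected :=
    ⟨⟨G.src e, Or.inr (Or.inl rfl)⟩, fun u hu v hv => (hsrcB' u hu).symm.trans (hsrcB' v hv)⟩
  have hnc' : ∀ f, ¬ B'.IsCutEdge f := by
    rw [noCut_iff]
    exact nocut_union ((noCut_iff B).1 hblob.2.2.1) hcyc
  have hle : B'.le H := by
    constructor
    · intro v hv
      rcases hv with hv | hv
      · exact hblob.1.1 hv
      · rcases hv with rfl | rfl | ⟨f, hf, rfl | rfl⟩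
        · exact H.src_mem e he
        · exact H.tgt_mem e he
        · exact H.src_mem f (hPF' hf)
        · exact H.tgt_mem f (hPF' hf)
    · intro f hf
      rcases hf with hf | hf
      · exact hblob.1.2 hf
      · rcases hf with hf | hf
        · exact (Set.eq_of_mem_singleton hf) ▸ he
        · exact hPF' hf
  have hmax := hblob.2.2.2 B' hle hconn' hnc' ⟨Set.subset_union_left, fun x hx => Or.inl hx⟩
  exact hmax.2 (Or.inr (Or.inl rfl))

lemma incident_of_boundary {H B : Subgraph G} (hblob : IsBlobIn H B) {g : G.E}
    (hg : g ∈ H.edges) (hx : Xor' (G.src g ∈ B.verts) (G.tgt g ∈ B.verts)) :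
    IncidentCut H B g := by
  refine ⟨?_, hx⟩
  rw [H.cut_char]
  refine ⟨hg, fun hc => ?_⟩
  have hmem := blob_edge hblob hg hc
    (by rcases hx with ⟨h, _⟩ | ⟨h, _⟩; exacts [Or.inl h, Or.inr h])
  rcases hx with ⟨_, h2⟩ | ⟨_, h2⟩
  exacts [h2 (B.tgt_mem g hmem), h2 (B.src_mem g hmem)]

lemma preserve {H B : Subgraph G} (hblob : IsBlobIn H B) {u v : G.V}
    (h : G.Conn {g ∈ H.edges | ¬ IncidentCut H B g} u v) :
    (u ∈ B.verts ↔ v ∈ B.verts) := by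
  induction h with
  | refl => exact Iff.rfl
  | tail hrtg hstep ih =>
    rename_i x y
    obtain ⟨g, hgF, ho⟩ := hstep
    have hgH : g ∈ H.edges := hgF.1
    have hnx : ¬ Xor' (G.src g ∈ B.verts) (G.tgt g ∈ B.verts) :=
      fun hx => hgF.2 (incident_of_boundary hblob hgH hx)
    have hiff : (G.src g ∈ B.verts ↔ G.tgt g ∈ B.verts) := by
      by_cases h1 : G.src g ∈ B.verts <;> by_cases h2 : G.tgt g ∈ B.verts <;>
        simp_all [Xor']
    rcases ho with ⟨h1, h2⟩ | ⟨h1, h2⟩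
    · exact ih.trans (h1 ▸ h2 ▸ hiff)
    · exact ih.trans (h1 ▸ h2 ▸ hiff.symm)

lemma att {H B : Subgraph G} (hblob : IsBlobIn H B) {A : Set G.E} (hA : A ⊆ H.edges)
    {u b : G.V} (hb : b ∈ B.verts) (hw : G.Conn A u b)
    (hn : ¬ G.Conn {g ∈ H.edges | ¬ IncidentCut H B g} u b) :
    ∃ f ∈ A, IncidentCut H B f ∧ ∃ w : G.V, (G.src f = w ∨ G.tgt f = w) ∧ w ∉ B.verts ∧
      G.Conn {g ∈ A | ¬ IncidentCut H B g} u w := by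
  have hBsub : B.edges ⊆ {g ∈ H.edges | ¬ IncidentCut H B g} := by
    intro g hg
    refine ⟨hblob.1.2 hg, fun hI => ?_⟩
    rcases hI.2 with ⟨_, h2⟩ | ⟨_, h2⟩
    exacts [h2 (B.tgt_mem g hg), h2 (B.src_mem g hg)]
  revert hn
  induction hw using Relation.ReflTransGen.head_induction_on with
  | refl => intro hn; exact absurd Conn.refl' hn
  | head hstep hrest ih =>
    rename_i x y
    intro hn
    obtain ⟨g, hgA, ho⟩ := hstep
    by_cases hI : IncidentCut H B g
    · by_cases hxB : x ∈ B.verts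
      · exact absurd ((hblob.2.1.2 x hxB b hb).mono hBsub) hn
      · exact ⟨g, hgA, hI, x, by tauto, hxB, Conn.refl'⟩
    · have hstep' : G.Step {g ∈ A | ¬ IncidentCut H B g} x y := ⟨g, ⟨hgA, hI⟩, ho⟩
      have hstepH : G.Step {g ∈ H.edges | ¬ IncidentCut H B g} x y := ⟨g, ⟨hA hgA, hI⟩, ho⟩
      have hn' : ¬ G.Conn {g ∈ H.edges | ¬ IncidentCut H B g} y b :=
        fun hc => hn ((Conn.single hstepH).trans hc)
      obtain ⟨f, hfA, hfI, w, hw1, hw2, hw3⟩ := ih hn'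
      exact ⟨f, hfA, hfI, w, hw1, hw2, (Conn.single hstep').trans hw3⟩

lemma incident_split {H B : Subgraph G} {g : G.E} {w : G.V} (hI : IncidentCut H B g)
    (hw : G.src g = w ∨ G.tgt g = w) (hwB : w ∉ B.verts) :
    (G.src g = w ∧ G.tgt g ∈ B.verts) ∨ (G.tgt g = w ∧ G.src g ∈ B.verts) := by
  rcases hw with rfl | rfl <;> rcases hI.2 with ⟨h1, h2⟩ | ⟨h1, h2⟩ <;> tauto

lemma outer_unique {H B : Subgraph G} {g : G.E} {w w' : G.V} (hI : IncidentCut H B g)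
    (hw : G.src g = w ∨ G.tgt g = w) (hwB : w ∉ B.verts)
    (hw' : G.src g = w' ∨ G.tgt g = w') (hwB' : w' ∉ B.verts) : w = w' := by
  rcases incident_split hI hw hwB with ⟨h1, h2⟩ | ⟨h1, h2⟩ <;>
    rcases hw' with rfl | rfl
  · exact h1.symm
  · exact absurd h2 hwB'
  · exact absurd h2 hwB'
  · exact h1.symm

lemma uniq {H B : Subgraph G} (hblob : IsBlobIn H B) {f f' : G.E}
    (hf : IncidentCut H B f) (hf' : IncidentCut H B f') {w w' : G.V}
    (hwf : G.src f = w ∨ G.tgt f = w) (hwB : w ∉ B.verts)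
    (hwf' : G.src f' = w' ∨ G.tgt f' = w') (hwB' : w' ∉ B.verts)
    (hc : G.Conn {g ∈ H.edges | ¬ IncidentCut H B g} w w') : f = f' := by
  by_contra hne
  have hsub : {g ∈ H.edges | ¬ IncidentCut H B g} ⊆ H.edges \ {f} := by
    intro g hg
    refine ⟨hg.1, fun hgf => hg.2 ?_⟩
    rw [Set.eq_of_mem_singleton hgf]
    exact hf
  have hBsub : B.edges ⊆ H.edges \ {f} := by
    intro g hg
    refine ⟨hblob.1.2 hg, fun hgf => ?_⟩
    have hfB : f ∈ B.edges := by rwa [Set.eq_of_mem_singleton hgf] at hg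
    rcases hf.2 with ⟨_, h2⟩ | ⟨_, h2⟩
    exacts [h2 (B.tgt_mem f hfB), h2 (B.src_mem f hfB)]
  have hf'H : f' ∈ H.edges := hf'.1.1
  have hf'ne : f' ∉ ({f} : Set G.E) := fun h => hne ((Set.eq_of_mem_singleton h).symm)
  have hP1 : G.Conn (H.edges \ {f}) w w' := hc.mono hsub
  -- step across f' to its endpoint inside B
  have hstep2 : ∃ v' ∈ B.verts, G.Conn (H.edges \ {f}) w' v' := by
    rcases incident_split hf' hwf' hwB' with ⟨h1, h2⟩ | ⟨h1, h2⟩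
    · exact ⟨G.tgt f', h2, Conn.single ⟨f', ⟨hf'H, hf'ne⟩, Or.inl ⟨h1, rfl⟩⟩⟩
    · exact ⟨G.src f', h2, Conn.single ⟨f', ⟨hf'H, hf'ne⟩, Or.inr ⟨rfl, h1⟩⟩⟩
  obtain ⟨v', hv'B, hP2⟩ := hstep2
  have hcontr : ¬ G.Conn (H.edges \ {f}) (G.src f) (G.tgt f) := ((H.cut_char f).1 hf.1).2
  rcases incident_split hf hwf hwB with ⟨h1, h2⟩ | ⟨h1, h2⟩
  · -- src f = w, tgt f ∈ B
    have : G.Conn (H.edges \ {f}) w (G.tgt f) :=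
      (hP1.trans hP2).trans ((hblob.2.1.2 v' hv'B _ h2).mono hBsub)
    exact hcontr (h1 ▸ this)
  · -- tgt f = w, src f ∈ B
    have : G.Conn (H.edges \ {f}) w (G.src f) :=
      (hP1.trans hP2).trans ((hblob.2.1.2 v' hv'B _ h2).mono hBsub)
    exact hcontr ((h1 ▸ this).symm)

lemma leaf_e {v : G.V} (hdeg : G.degree v = 1) :
    ∃ m : G.E, (G.src m = v ∨ G.tgt m = v) ∧ ¬(G.src m = v ∧ G.tgt m = v) ∧
      ∀ g : G.E, (G.src g = v ∨ G.tgt g = v) → g = m := by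
  classical
  unfold degree inDeg outDeg at hdeg
  have hne : ∀ (p : G.E → Prop), Nat.card {e : G.E // p e} = 0 → ∀ e, ¬ p e := by
    intro p h0 e hp
    rcases Nat.card_eq_zero.mp h0 with h | h
    · exact h.false ⟨e, hp⟩
    · exact not_finite {e : G.E // p e}
  have hone : ∀ (p : G.E → Prop), Nat.card {e : G.E // p e} = 1 →
      ∃ m, p m ∧ ∀ g, p g → g = m := by
    intro p h1
    obtain ⟨hsub, ⟨m, hm⟩⟩ := Nat.card_eq_one_iff_unique.mp h1
    exact ⟨m, hm, fun g hg => congrArg Subtype.val (hsub.allEq ⟨g, hg⟩ ⟨m, hm⟩)⟩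
  rcases Nat.add_eq_one_iff.mp hdeg with ⟨h0, h1⟩ | ⟨h1, h0⟩
  · obtain ⟨m, hm, hu⟩ := hone _ h1
    refine ⟨m, Or.inl hm, fun h => hne _ h0 m h.2, fun g hg => ?_⟩
    rcases hg with hg | hg
    · exact hu g hg
    · exact absurd hg (hne _ h0 g)
  · obtain ⟨m, hm, hu⟩ := hone _ h1
    refine ⟨m, Or.inr hm, fun h => hne _ h0 m h.1, fun g hg => ?_⟩
    rcases hg with hg | hg
    · exact absurd hg (hne _ h0 g)
    · exact hu g hg

lemma noentry {v : G.V} {m : G.E} (hm : ∀ g, (G.src g = v ∨ G.tgt g = v) → g = m)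
    {F : Set G.E} (hmF : m ∉ F) : ∀ {x y : G.V}, G.Conn F x y → y = v → x = v := by
  intro x y h
  induction h with
  | refl => exact id
  | tail hrtg hstep ih =>
    rename_i b c
    intro hc
    subst hc
    obtain ⟨g, hgF, ho⟩ := hstep
    have hgm : g = m := hm g (by tauto)
    exact absurd (hgm ▸ hgF) hmF

end MDigraph
namespace MDigraph
variable {G : MDigraph}

lemma leaf_blobless {B' : Subgraph G} (hconn : B'.IsConnected)
    (hnc : ∀ f, ¬ B'.IsCutEdge f) {v : G.V} {m : G.E}
    (hm1 : G.src m = v ∨ G.tgt m = v) (hm2 : ¬(G.src m = v ∧ G.tgt m = v))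
    (hm3 : ∀ g, (G.src g = v ∨ G.tgt g = v) → g = m)
    (hv : v ∈ B'.verts) : B'.verts = {v} ∧ m ∉ B'.edges := by
  have hmB : m ∉ B'.edges := by
    intro hmem
    have hcc : G.Conn (B'.edges \ {m}) (G.src m) (G.tgt m) := by
      by_contra hc
      exact hnc m ((B'.cut_char m).2 ⟨hmem, hc⟩)
    have hmself : m ∉ B'.edges \ {m} := fun hh => hh.2 rfl
    rcases hm1 with h | h
    · exact hm2 ⟨h, noentry hm3 hmself hcc.symm h⟩
    · exact hm2 ⟨noentry hm3 hmself hcc h, h⟩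
  exact ⟨Set.eq_singleton_iff_unique_mem.mpr
    ⟨hv, fun x hx => noentry hm3 hmB (hconn.2 x hx v hv) rfl⟩, hmB⟩

end MDigraph

/-- Lemma on subnetworks and blobs.
Let `N` (here `G`) be a finite connected network whose degree-1 nodes are
bijectively labelled by `X`, and let `M` be a connected subnetwork of `N`, with
the restricted labelling of some of its degree-1 nodes by `Y ⊆ X`.  If a set
`S ⊆ Y` with `|S| ≥ 3` determines a blob `B₀` of `M`, then `S` determines a
blob `B` of `N`, namely the blob of `N` containing `B₀`; moreover, for each
`s ∈ S`, the cut edge of `N` incident to `B` through which the path from `B`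
to `s` passes (i.e. whose endpoints remain connected to the leaf `s` after
deleting the cut edges of `N` incident to `B`) is an edge of `M`. -/
theorem stmt_1 {X : Type} (G : MDigraph) (leafMap : X → G.V)
    (hinj : Function.Injective leafMap)
    (hbij : ∀ v, G.degree v = 1 ↔ ∃ x, leafMap x = v)
    (hG : ∀ u v, G.Conn Set.univ u v)
    (M : Subgraph G) (hM : M.IsConnected)
    (Y : Set X) (hY : ∀ y ∈ Y, leafMap y ∈ M.verts)
    (S : Set X) (hSY : S ⊆ Y) (hS : 3 ≤ S.ncard)
    (B₀ : Subgraph G) (hB₀ : IsBlobIn M B₀)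
    (hdet : DeterminesIn M B₀ leafMap S) :
    ∃ B : Subgraph G, IsBlobIn (top G) B ∧ B₀.le B ∧
      DeterminesIn (top G) B leafMap S ∧
      ∀ s ∈ S, ∀ e, IncidentCut (top G) B e →
        (G.Conn {e' | ¬ IncidentCut (top G) B e'} (G.src e) (leafMap s) ∨
         G.Conn {e' | ¬ IncidentCut (top G) B e'} (G.tgt e) (leafMap s)) →
        e ∈ M.edges := by
  classical
  obtain ⟨B, hB, hB₀B⟩ := exists_blob B₀ hB₀.2.1 hB₀.2.2.1
  have hdeg1 : ∀ x : X, G.degree (leafMap x) = 1 := fun x => (hbij (leafMap x)).2 ⟨x, rfl⟩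
  have hSfin : S.Finite := by
    rcases Set.finite_or_infinite S with h | h
    · exact h
    · rw [Set.Infinite.ncard h] at hS; omega
  have hothers : ∀ s ∈ S, ∃ t ∈ S, ∃ u ∈ S, t ≠ s ∧ u ≠ s ∧ t ≠ u := by
    intro s hs
    have h2 : 1 < (S \ {s}).ncard := by
      rw [Set.ncard_diff_singleton_of_mem hs]; omega
    obtain ⟨a, b, ha, hb, hab⟩ := (Set.one_lt_ncard_iff hSfin.diff).1 h2
    exact ⟨a, ha.1, b, hb.1, ha.2, hb.2, hab⟩
  -- no leaf of S lies in B₀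
  have hnoleaf0 : ∀ s ∈ S, leafMap s ∉ B₀.verts := by
    intro s hs hin
    obtain ⟨m, hm1, hm2, hm3⟩ := leaf_e (hdeg1 s)
    obtain ⟨hBv, hmB⟩ := leaf_blobless hB₀.2.1 hB₀.2.2.1 hm1 hm2 hm3 hin
    obtain ⟨t, ht, u, hu, hts, hus, htu⟩ := hothers s hs
    have hD0 : ∀ g, IncidentCut M B₀ g → g = m := by
      intro g hg
      rcases hg.2 with ⟨hg1, _⟩ | ⟨hg1, _⟩
      · exact hm3 g (Or.inl (by rwa [hBv] at hg1))
      · exact hm3 g (Or.inr (by rwa [hBv] at hg1))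
    have hMconn : G.Conn M.edges (leafMap t) (leafMap u) :=
      hM.2 _ (hY t (hSY ht)) _ (hY u (hSY hu))
    have hmnot : m ∉ M.edges \ {m} := fun hh => hh.2 rfl
    have hconn' : G.Conn (M.edges \ {m}) (leafMap t) (leafMap u) := by
      rcases connD m hMconn with h | ⟨c₁, c₂, hc₁, hc₂, h1, h2⟩
      · exact h
      · have hne1 : c₁ ≠ leafMap s := fun hc => hts (hinj (noentry hm3 hmnot (hc ▸ h1) rfl))
        have hne2 : c₂ ≠ leafMap s := fun hc => hus (hinj (noentry hm3 hmnot (hc ▸ h2.symm) rfl))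
        have hceq : c₁ = c₂ := by
          rcases hm1 with hv | hv <;> rcases hc₁ with rfl | rfl <;> rcases hc₂ with rfl | rfl <;>
            first | rfl | (exact absurd hv hne1) | (exact absurd hv hne2)
        exact h1.trans (hceq ▸ h2)
    have hsubF : M.edges \ {m} ⊆ {g ∈ M.edges | ¬ IncidentCut M B₀ g} :=
      fun g hg => ⟨hg.1, fun hI => hg.2 (Set.mem_singleton_iff.mpr (hD0 g hI))⟩
    exact hdet t ht u hu htu (hconn'.mono hsubF)
  -- no leaf of S lies in B
  have hnoleaf : ∀ s ∈ S, leafMap s ∉ B.verts := by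
    intro s hs hin
    obtain ⟨m, hm1, hm2, hm3⟩ := leaf_e (hdeg1 s)
    obtain ⟨hBv, hmB⟩ := leaf_blobless hB.2.1 hB.2.2.1 hm1 hm2 hm3 hin
    obtain ⟨v0, hv0⟩ := hB₀.2.1.1
    have hv0B : v0 ∈ B.verts := hB₀B.1 hv0
    rw [hBv] at hv0B
    exact hnoleaf0 s hs ((Set.eq_of_mem_singleton hv0B) ▸ hv0)
  obtain ⟨v0, hv0⟩ := hB₀.2.1.1
  have hb0B : v0 ∈ B.verts := hB₀B.1 hv0
  have hb0M : v0 ∈ M.verts := hB₀.1.1 hv0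
  have hnconnB : ∀ s ∈ S, ∀ b ∈ B.verts,
      ¬ G.Conn {g ∈ (top G).edges | ¬ IncidentCut (top G) B g} (leafMap s) b :=
    fun s hs b hb hc => hnoleaf s hs ((preserve hB hc).2 hb)
  -- attachment edges in G
  have hes : ∀ s ∈ S, ∃ f, IncidentCut (top G) B f ∧ ∃ w,
      (G.src f = w ∨ G.tgt f = w) ∧ w ∉ B.verts ∧
      G.Conn {g ∈ (top G).edges | ¬ IncidentCut (top G) B g} (leafMap s) w := by
    intro s hs
    obtain ⟨f, _, hfI, w, hw1, hw2, hw3⟩ := att hB subset_rfl hb0B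
      (show G.Conn (top G).edges (leafMap s) v0 from hG _ _) (hnconnB s hs v0 hb0B)
    exact ⟨f, hfI, w, hw1, hw2, hw3⟩
  choose! es hesI ws hws1 hws2 hws3 using hes
  -- uniqueness of the attachment edge
  have hsubMB : {g ∈ M.edges | ¬ IncidentCut (top G) B g} ⊆
      {g ∈ (top G).edges | ¬ IncidentCut (top G) B g} :=
    fun g hg => ⟨Set.mem_univ g, hg.2⟩
  have huniq : ∀ s (hs : s ∈ S), ∀ f, IncidentCut (top G) B f → ∀ x,
      (G.src f = x ∨ G.tgt f = x) → x ∉ B.verts →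
      G.Conn {g ∈ (top G).edges | ¬ IncidentCut (top G) B g} (leafMap s) x → f = es s hs :=
    fun s hs f hf x hxor hxB hxc =>
      uniq hB hf (hesI s hs) hxor hxB (hws1 s hs) (hws2 s hs) (hxc.symm.trans (hws3 s hs))
  -- attachment edges in M
  have hfs : ∀ s ∈ S, ∃ f ∈ M.edges, IncidentCut M B₀ f ∧ ∃ w,
      (G.src f = w ∨ G.tgt f = w) ∧ w ∉ B₀.verts ∧
      G.Conn {g ∈ M.edges | ¬ IncidentCut M B₀ g} (leafMap s) w := by
    intro s hs
    exact att hB₀ subset_rfl hv0 (hM.2 _ (hY s (hSY hs)) _ hb0M)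
      (fun hc => hnoleaf0 s hs ((preserve hB₀ hc).2 hv0))
  choose! fs hfsM hfsI w0 hw01 hw02 hw03 using hfs
  -- the G-attachment edge is an edge of M
  have hesM : ∀ s (hs : s ∈ S), es s hs ∈ M.edges := by
    intro s hs
    obtain ⟨f, hfM, hfI, w, hw1, hw2, hw3⟩ := att hB
      (show M.edges ⊆ (top G).edges from fun x _ => Set.mem_univ x) hb0B
      (hM.2 _ (hY s (hSY hs)) _ hb0M) (hnconnB s hs v0 hb0B)
    have heq := huniq s hs f hfI w hw1 hw2 (hw3.mono hsubMB)
    rw [← heq]; exact hfM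
  -- key claim
  have hkey : ∀ s (hs : s ∈ S), es s hs = fs s hs ∨ (¬ IncidentCut M B₀ (es s hs) ∧ ∃ w,
      (G.src (es s hs) = w ∨ G.tgt (es s hs) = w) ∧ w ∉ B.verts ∧
      G.Conn {g ∈ M.edges | ¬ IncidentCut M B₀ g} (leafMap s) w) := by
    intro s hs
    obtain ⟨v₀, hv₀B₀, hor⟩ : ∃ v₀, v₀ ∈ B₀.verts ∧
        ((G.src (fs s hs) = w0 s hs ∧ G.tgt (fs s hs) = v₀) ∨
         (G.tgt (fs s hs) = w0 s hs ∧ G.src (fs s hs) = v₀)) := by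
      rcases incident_split (hfsI s hs) (hw01 s hs) (hw02 s hs) with ⟨h1, h2⟩ | ⟨h1, h2⟩
      exacts [⟨G.tgt (fs s hs), h2, Or.inl ⟨h1, rfl⟩⟩, ⟨G.src (fs s hs), h2, Or.inr ⟨h1, rfl⟩⟩]
    have hv₀B : v₀ ∈ B.verts := hB₀B.1 hv₀B₀
    have hv : G.src (fs s hs) = v₀ ∨ G.tgt (fs s hs) = v₀ := by
      rcases hor with ⟨h1, h2⟩ | ⟨h1, h2⟩
      exacts [Or.inr h2, Or.inl h2]
    have hstep : G.Step ({g ∈ M.edges | ¬ IncidentCut M B₀ g} ∪ {fs s hs}) (w0 s hs) v₀ := by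
      rcases hor with ⟨h1, h2⟩ | ⟨h1, h2⟩
      exacts [⟨fs s hs, Or.inr rfl, Or.inl ⟨h1, h2⟩⟩, ⟨fs s hs, Or.inr rfl, Or.inr ⟨h2, h1⟩⟩]
    have hconnA : G.Conn ({g ∈ M.edges | ¬ IncidentCut M B₀ g} ∪ {fs s hs}) (leafMap s) v₀ :=
      ((hw03 s hs).mono Set.subset_union_left).trans (Conn.single hstep)
    obtain ⟨f', hf'A, hf'I, w, hwor, hwB, hwc⟩ := att hB
      (show ({g ∈ M.edges | ¬ IncidentCut M B₀ g} ∪ {fs s hs}) ⊆ (top G).edges from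
        fun x _ => Set.mem_univ x) hv₀B hconnA (hnconnB s hs v₀ hv₀B)
    have hf'es : f' = es s hs := huniq s hs f' hf'I w hwor hwB
      (hwc.mono (show {g ∈ ({g ∈ M.edges | ¬ IncidentCut M B₀ g} ∪ {fs s hs}) |
            ¬ IncidentCut (top G) B g} ⊆
            {g ∈ (top G).edges | ¬ IncidentCut (top G) B g} from
        fun g hg => ⟨Set.mem_univ g, hg.2⟩))
    simp only [Set.mem_union, Set.mem_singleton_iff] at hf'A
    rcases hf'A with hf'F | hf'f
    · -- f' lies in F₀ : the right branch
      refine Or.inr ⟨by rw [← hf'es]; exact hf'F.2, w, by rw [← hf'es]; exact hwor, hwB, ?_⟩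
      have hsubF₀ : {g ∈ ({g ∈ M.edges | ¬ IncidentCut M B₀ g} ∪ {fs s hs}) |
          ¬ IncidentCut (top G) B g} \ {fs s hs} ⊆ {g ∈ M.edges | ¬ IncidentCut M B₀ g} := by
        intro g hg
        rcases hg.1.1 with h | h
        · exact h
        · exact absurd h hg.2
      have hsubFB : {g ∈ ({g ∈ M.edges | ¬ IncidentCut M B₀ g} ∪ {fs s hs}) |
          ¬ IncidentCut (top G) B g} \ {fs s hs} ⊆
          {g ∈ (top G).edges | ¬ IncidentCut (top G) B g} :=
        fun g hg => ⟨Set.mem_univ g, hg.1.2⟩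
      rcases connD (fs s hs) hwc with hcc | ⟨c₁, c₂, hc₁, hc₂, hcc1, hcc2⟩
      · exact hcc.mono hsubF₀
      · have hc₁nB : c₁ ∉ B.verts :=
          fun hmem => hnconnB s hs c₁ hmem (hcc1.mono hsubFB)
        have hc₂nB : c₂ ∉ B.verts :=
          fun hmem => hwB ((preserve hB (hcc2.mono hsubFB)).1 hmem)
        have hc12 : c₁ = c₂ := by
          rcases hv with hv | hv <;> rcases hc₁ with rfl | rfl <;> rcases hc₂ with rfl | rfl <;>
            first
              | rfl
              | (exact absurd (by rw [hv]; exact hv₀B) hc₁nB)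
              | (exact absurd (by rw [hv]; exact hv₀B) hc₂nB)
        exact (hcc1.mono hsubF₀).trans (hc12 ▸ (hcc2.mono hsubF₀))
    · exact Or.inl (by rw [← hf'es, hf'f])
  -- injectivity of the attachment map on S
  have hinjes : ∀ s (hs : s ∈ S), ∀ t (ht : t ∈ S), s ≠ t → es s hs ≠ es t ht := by
    intro s hs t ht hst heq
    rcases hkey s hs with h1 | ⟨hn1, w1, hw1or, hw1B, hw1c⟩ <;>
      rcases hkey t ht with h2 | ⟨hn2, w2, hw2or, hw2B, hw2c⟩
    · have hff : fs s hs = fs t ht := by rw [← h1, ← h2, heq]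
      have hw0eq : w0 s hs = w0 t ht := outer_unique (hfsI s hs) (hw01 s hs) (hw02 s hs)
        (by rw [hff]; exact hw01 t ht) (hw02 t ht)
      have hct := (hw03 t ht).symm
      rw [← hw0eq] at hct
      exact hdet s hs t ht hst ((hw03 s hs).trans hct)
    · exact hn2 (by rw [← heq, h1]; exact hfsI s hs)
    · exact hn1 (by rw [heq, h2]; exact hfsI t ht)
    · have hw2or' : G.src (es s hs) = w2 ∨ G.tgt (es s hs) = w2 := by rw [heq]; exact hw2or
      have hww : w1 = w2 := outer_unique (hesI s hs) hw1or hw1B hw2or' hw2B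
      have hct := hw2c.symm
      rw [← hww] at hct
      exact hdet s hs t ht hst (hw1c.trans hct)
  -- conclusion
  have hdetG : DeterminesIn (top G) B leafMap S := by
    intro s hs t ht hst hc
    have hconnBws : G.Conn {g ∈ (top G).edges | ¬ IncidentCut (top G) B g} (ws s hs) (ws t ht) :=
      ((hws3 s hs).symm.trans hc).trans (hws3 t ht)
    exact hinjes s hs t ht hst (uniq hB (hesI s hs) (hesI t ht) (hws1 s hs) (hws2 s hs)
      (hws1 t ht) (hws2 t ht) hconnBws)
  refine ⟨B, hB, hB₀B, hdetG, ?_⟩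
  intro s hs e hInc hcon
  have hxw : ∃ x, (G.src e = x ∨ G.tgt e = x) ∧
      G.Conn {e' | ¬ IncidentCut (top G) B e'} x (leafMap s) := by
    rcases hcon with h | h
    exacts [⟨G.src e, Or.inl rfl, h⟩, ⟨G.tgt e, Or.inr rfl, h⟩]
  obtain ⟨x, hxor, hxc⟩ := hxw
  have hxc' : G.Conn {g ∈ (top G).edges | ¬ IncidentCut (top G) B g} x (leafMap s) :=
    hxc.mono (show {e' | ¬ IncidentCut (top G) B e'} ⊆
        {g ∈ (top G).edges | ¬ IncidentCut (top G) B g} from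
      fun g hg => ⟨Set.mem_univ g, hg⟩)
  have hxB : x ∉ B.verts := fun hmem => hnoleaf s hs ((preserve hB hxc').1 hmem)
  have heq := huniq s hs e hInc x hxor hxB hxc'.symm
  rw [heq]; exact hesM s hs
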